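/- Let C be a binary [n,k,d] linear code with k < n, let S be a nonempty set of coordinate positions with |S| ≤ d-1, and let t ≥ 0 and b ≥ 0 be integers. For a t-tuple (c_1, …, c_t) of codewords of C^⊥, let w denote the number of indices m for which c_m has odd Hamming weight on S. Then Σ over all t-tuples (c_1, …, c_t) ∈ (C^⊥)^t of max(b - w, 0) equals 2^{t(n-k) - t} · Σ_{i=1}^{b} i · C(t, b-i). In probabilistic terms, if the t codewords are drawn independently and uniformly at random from C^⊥, the expected value of max(b - w, 0) is 2^{-t} · Σ_{i=1}^{b} i · C(t, b-i). -/

import Mathlib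

open Finset

/-- The dual code of a binary linear code `C ⊆ F_2^n`. -/
def dualCode {n : ℕ} (C : Submodule (ZMod 2) (Fin n → ZMod 2)) :
    Set (Fin n → ZMod 2) :=
  {v | ∀ c ∈ C, ∑ j, v j * c j = 0}


noncomputable def dotForm (n : ℕ) : LinearMap.BilinForm (ZMod 2) (Fin n → ZMod 2) :=
  LinearMap.mk₂ (ZMod 2) (fun v w => ∑ j, v j * w j)
    (fun x y z => by simp [add_mul, Finset.sum_add_distrib])
    (fun a x y => by simp [Finset.mul_sum, mul_assoc])
    (fun x y z => by simp [mul_add, Finset.sum_add_distrib])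
    (fun a x y => by simp [Finset.mul_sum, mul_left_comm])

lemma dotForm_apply {n : ℕ} (v w : Fin n → ZMod 2) : dotForm n v w = ∑ j, v j * w j := rfl

lemma dotForm_comm {n : ℕ} (v w : Fin n → ZMod 2) : dotForm n v w = dotForm n w v := by
  simp [dotForm_apply, mul_comm]

lemma dotForm_refl {n : ℕ} : (dotForm n).IsRefl := fun x y h => by
  rw [dotForm_comm]; exact h

lemma dotForm_nondegenerate {n : ℕ} : (dotForm n).Nondegenerate := by
  have hL : ∀ v : Fin n → ZMod 2, (∀ w, dotForm n v w = 0) → v = 0 := by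
    intro v h
    funext j
    have := h (Pi.single j 1)
    simpa [dotForm_apply, Pi.single_apply, mul_ite, Finset.sum_ite_eq'] using this
  exact ⟨hL, fun v h => hL v fun w => by rw [dotForm_comm]; exact h w⟩

lemma zmod2_cases : ∀ a : ZMod 2, a = 0 ∨ a = 1 := by decide

lemma dualCode_eq {n : ℕ} (C : Submodule (ZMod 2) (Fin n → ZMod 2)) :
    ∀ v, v ∈ dualCode C ↔ v ∈ (dotForm n).orthogonal C := by
  intro v
  simp only [dualCode, Set.mem_setOf_eq, LinearMap.BilinForm.mem_orthogonal_iff,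
    LinearMap.BilinForm.isOrtho_def, dotForm_apply]
  constructor <;> intro h c hc <;>
    · rw [show ∀ x y : Fin n → ZMod 2, (∑ j, x j * y j) = ∑ j, y j * x j from
        fun x y => Finset.sum_congr rfl fun j _ => mul_comm _ _]
      exact h c hc


lemma aux_choose (t b : ℕ) :
    ∑ j ∈ range (t + 1), t.choose j * (b - j) = ∑ i ∈ Icc 1 b, i * t.choose (b - i) := by
  have h1 : ∑ i ∈ Icc 1 b, i * t.choose (b - i) = ∑ j ∈ range b, (b - j) * t.choose j := by
    refine Finset.sum_nbij' (fun i => b - i) (fun j => b - j) ?_ ?_ ?_ ?_ ?_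
    · intro i hi; simp only [mem_Icc] at hi; simp only [mem_range]; omega
    · intro j hj; simp only [mem_range] at hj; simp only [mem_Icc]; omega
    · intro i hi; simp only [mem_Icc] at hi; omega
    · intro j hj; simp only [mem_range] at hj; omega
    · intro i hi; simp only [mem_Icc] at hi
      congr 1; omega
  rw [h1]
  have h2 : ∑ j ∈ range (t + 1), t.choose j * (b - j)
      = ∑ j ∈ range (t + b + 1), (b - j) * t.choose j := by
    rw [show ∑ j ∈ range (t + 1), t.choose j * (b - j)
        = ∑ j ∈ range (t + 1), (b - j) * t.choose j from
      Finset.sum_congr rfl fun j _ => mul_comm _ _]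
    refine Finset.sum_subset (range_subset_range.2 (by omega)) ?_
    intro j hj hj2
    simp only [mem_range] at hj hj2
    rw [Nat.choose_eq_zero_of_lt (by omega), mul_zero]
  have h3 : ∑ j ∈ range b, (b - j) * t.choose j
      = ∑ j ∈ range (t + b + 1), (b - j) * t.choose j := by
    refine Finset.sum_subset (range_subset_range.2 (by omega)) ?_
    intro j hj hj2
    simp only [mem_range] at hj hj2
    rw [show b - j = 0 by omega, zero_mul]
  rw [h2, h3]


lemma aux_sum_patterns (t b : ℕ) :
    ∑ p : Fin t → ZMod 2, (b - (univ.filter fun m => p m = 1).card)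
      = ∑ j ∈ range (t + 1), t.choose j * (b - j) := by
  classical
  have key : ∑ p : Fin t → ZMod 2, (b - (univ.filter fun m => p m = 1).card)
      = ∑ s : Finset (Fin t), (b - s.card) := by
    refine Finset.sum_nbij' (fun p => univ.filter fun m => p m = 1)
      (fun s => fun m => if m ∈ s then 1 else 0) ?_ ?_ ?_ ?_ ?_
    · intros; exact mem_univ _
    · intros; exact mem_univ _
    · intro p _
      funext m
      simp only [mem_filter, mem_univ, true_and]
      rcases zmod2_cases (p m) with h | h <;> simp [h]
    · intro s _
      ext m
      simp only [mem_filter, mem_univ, true_and]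
      by_cases h : m ∈ s <;> simp [h]
    · intros; rfl
  have hp := Finset.sum_powerset_apply_card (fun m => b - m) (x := (univ : Finset (Fin t)))
  simp only [card_univ, Fintype.card_fin, smul_eq_mul, powerset_univ] at hp
  rw [key, hp]

lemma exp_arith (n k t : ℕ) : (n - k - 1) * t = t * (n - k) - t := by
  rw [Nat.sub_mul, one_mul, Nat.mul_comm]

section Main
variable {n k d : ℕ} (C : Submodule (ZMod 2) (Fin n → ZMod 2))

open scoped Classical in
lemma fiber_card
    (hk : Module.finrank (ZMod 2) C = k)
    (hd₁ : ∀ c ∈ C, c ≠ 0 → d ≤ hammingNorm c)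
    (hkn : k < n)
    (S : Finset (Fin n)) (hS : S.Nonempty) (hSd : S.card ≤ d - 1) (a : ZMod 2) :
    (univ.filter fun v : Fin n → ZMod 2 => v ∈ dualCode C ∧ ∑ i ∈ S, v i = a).card
      = 2 ^ (n - k - 1) := by
  set D := (dotForm n).orthogonal C with hD
  -- rank and cardinality of D
  have hrD : Module.finrank (ZMod 2) D = n - k := by
    rw [hD, LinearMap.BilinForm.finrank_orthogonal dotForm_nondegenerate,
      Module.finrank_fin_fun, hk]
  have hcardD : Fintype.card D = 2 ^ (n - k) := by
    rw [Module.card_eq_pow_finrank (K := ZMod 2), ZMod.card, hrD]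
  -- the indicator vector of S is not in C
  set eS : Fin n → ZMod 2 := fun j => if j ∈ S then 1 else 0 with heS
  have hnormS : hammingNorm eS = S.card := by
    unfold hammingNorm
    congr 1
    ext j
    by_cases h : j ∈ S <;> simp [heS, h]
  have heS0 : eS ≠ 0 := by
    obtain ⟨i, hi⟩ := hS
    intro h
    have := congrFun h i
    simp [heS, hi] at this
  have heSC : eS ∉ C := by
    intro h
    have h1 := hd₁ eS h heS0
    rw [hnormS] at h1
    have h2 := Finset.card_pos.2 hS
    omega
  -- existence of a dual codeword with odd parity on S
  have hBS : ∀ v : Fin n → ZMod 2, dotForm n v eS = ∑ i ∈ S, v i := by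
    intro v
    rw [dotForm_apply]
    calc ∑ j, v j * eS j = ∑ j, if j ∈ S then v j else 0 :=
          Finset.sum_congr rfl fun j _ => by by_cases h : j ∈ S <;> simp [heS, h]
      _ = ∑ i ∈ S, v i := by rw [Finset.sum_ite_mem, univ_inter]
  have hv0 : ∃ v₀ ∈ D, ∑ i ∈ S, v₀ i = 1 := by
    by_contra hcon
    push_neg at hcon
    have : eS ∈ (dotForm n).orthogonal D := by
      intro v hv
      rw [hBS]
      rcases zmod2_cases (∑ i ∈ S, v i) with h | h
      · exact h
      · exact absurd h (hcon v hv)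
    rw [hD, LinearMap.BilinForm.orthogonal_orthogonal dotForm_nondegenerate dotForm_refl] at this
    exact heSC this
  obtain ⟨v₀, hv₀D, hv₀S⟩ := hv0
  -- the two fibers have equal cardinality
  set F : ZMod 2 → Finset (Fin n → ZMod 2) :=
    fun a => univ.filter fun v => v ∈ dualCode C ∧ ∑ i ∈ S, v i = a with hF
  have hv₀v₀ : ∀ v : Fin n → ZMod 2, v + v₀ + v₀ = v := by
    intro v
    funext j
    have : ∀ x y : ZMod 2, x + y + y = x := by decide
    exact this _ _
  have haa : ∀ x : ZMod 2, x + 1 + 1 = x := by decide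
  have hswap : ∀ a : ZMod 2, ∀ v ∈ F a, v + v₀ ∈ F (a + 1) := by
    intro a v hv
    simp only [hF, mem_filter, mem_univ, true_and, dualCode_eq] at hv ⊢
    refine ⟨D.add_mem hv.1 hv₀D, ?_⟩
    simp only [Pi.add_apply, Finset.sum_add_distrib, hv.2, hv₀S]
  have hcards : ∀ a : ZMod 2, (F a).card = (F (a + 1)).card := by
    intro a
    refine Finset.card_nbij' (fun v => v + v₀) (fun v => v + v₀)
      (fun v hv => hswap a v hv) (fun v hv => by
        have := hswap (a + 1) v hv
        rwa [haa a] at this)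
      (fun v _ => hv₀v₀ v) (fun v _ => hv₀v₀ v)
  have hsplit : (F 0).card + (F 1).card = 2 ^ (n - k) := by
    rw [← hcardD]
    have hdisj : Disjoint (F 0) (F 1) := by
      rw [Finset.disjoint_left]
      intro v h0 h1
      simp only [hF, mem_filter] at h0 h1
      rw [h0.2.2] at h1
      exact absurd h1.2.2 (by decide)
    rw [← Finset.card_union_of_disjoint hdisj]
    have hU : F 0 ∪ F 1 = univ.filter fun v => v ∈ dualCode C := by
      ext v
      simp only [hF, mem_union, mem_filter, mem_univ, true_and]
      rcases zmod2_cases (∑ i ∈ S, v i) with h | h <;> simp [h]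
    have h1 : (univ.filter fun v : Fin n → ZMod 2 => v ∈ dualCode C)
        = univ.filter fun v => v ∈ D :=
      Finset.filter_congr fun v _ => dualCode_eq C v
    rw [hU, h1]
    exact (Fintype.card_subtype _).symm.trans (Fintype.card_congr (Equiv.refl _))
  have h01 := hcards 0
  rw [zero_add] at h01
  have hpow : 2 ^ (n - k) = 2 * 2 ^ (n - k - 1) := by
    rw [← pow_succ']
    congr 1
    omega
  clear_value F
  have hx : 2 * #(F 0) = 2 * 2 ^ (n - k - 1) := by
    rw [two_mul, ← hpow, ← hsplit, h01]
  have hx0 : #(F 0) = 2 ^ (n - k - 1) := Nat.eq_of_mul_eq_mul_left (by norm_num) hx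
  have hx1 : #(F 1) = 2 ^ (n - k - 1) := h01 ▸ hx0
  rw [hF] at hx0 hx1
  rcases zmod2_cases a with h | h <;> rw [h]
  · simpa using hx0
  · simpa using hx1

end Main

open scoped Classical in
/-- The sum over all `t`-tuples of dual codewords of `max(b - w, 0)`, where `w`
is the number of entries with odd weight on `S`, equals
`2^{t(n-k) - t} · Σ_{i=1}^{b} i · C(t, b-i)`.  (In `ℕ`, `b - w` is truncated
subtraction, i.e. `max(b - w, 0)`.) -/
theorem sum_deficiency_over_tuples {n k d t b : ℕ}
    (C : Submodule (ZMod 2) (Fin n → ZMod 2))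
    (hk : Module.finrank (ZMod 2) C = k)
    (hd₁ : ∀ c ∈ C, c ≠ 0 → d ≤ hammingNorm c)
    (hd₂ : ∃ c ∈ C, c ≠ 0 ∧ hammingNorm c = d)
    (hkn : k < n)
    (S : Finset (Fin n)) (hS : S.Nonempty) (hSd : S.card ≤ d - 1) :
    (∑ c : Fin t → Fin n → ZMod 2,
        if ∀ m, c m ∈ dualCode C then
          b - Set.ncard {m : Fin t | ∑ i ∈ S, c m i = 1}
        else 0)
      = 2 ^ (t * (n - k) - t) * ∑ i ∈ Finset.Icc 1 b, i * t.choose (b - i) := by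
  have hfib := fiber_card C hk hd₁ hkn S hS hSd
  have hsum := Finset.sum_fiberwise (univ : Finset (Fin t → Fin n → ZMod 2))
      (fun c => (fun m => ∑ i ∈ S, c m i))
      (fun c => if ∀ m, c m ∈ dualCode C then
          b - Set.ncard {m : Fin t | ∑ i ∈ S, c m i = 1} else 0)
  rw [← hsum]
  have hinner : ∀ p : Fin t → ZMod 2,
      ∑ c ∈ univ.filter (fun c : Fin t → Fin n → ZMod 2 => (fun m => ∑ i ∈ S, c m i) = p),
        (if ∀ m, c m ∈ dualCode C then
          b - Set.ncard {m : Fin t | ∑ i ∈ S, c m i = 1} else 0)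
      = 2 ^ (t * (n - k) - t) * (b - (univ.filter fun m => p m = 1).card) := by
    intro p
    have step1 : ∀ c ∈ univ.filter
        (fun c : Fin t → Fin n → ZMod 2 => (fun m => ∑ i ∈ S, c m i) = p),
        (if ∀ m, c m ∈ dualCode C then
            b - Set.ncard {m : Fin t | ∑ i ∈ S, c m i = 1} else 0)
        = (if ∀ m, c m ∈ dualCode C then
            b - (univ.filter fun m => p m = 1).card else 0) := by
      intro c hc
      simp only [mem_filter, mem_univ, true_and, funext_iff] at hc
      have hnc : Set.ncard {m : Fin t | ∑ i ∈ S, c m i = 1}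
          = (univ.filter fun m => p m = 1).card := by
        rw [Set.ncard_eq_toFinset_card', Set.toFinset_setOf]
        congr 1
        refine filter_congr fun m _ => ?_
        rw [hc m]
      rw [hnc]
    rw [Finset.sum_congr rfl step1, ← Finset.sum_filter, Finset.sum_const, smul_eq_mul]
    congr 1
    have hset : (univ.filter
          (fun c : Fin t → Fin n → ZMod 2 => (fun m => ∑ i ∈ S, c m i) = p)).filter
          (fun c => ∀ m, c m ∈ dualCode C)
        = Fintype.piFinset
            (fun m => univ.filter fun v : Fin n → ZMod 2 =>
              v ∈ dualCode C ∧ ∑ i ∈ S, v i = p m) := by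
      ext c
      simp only [mem_filter, mem_univ, true_and, Fintype.mem_piFinset, funext_iff]
      exact ⟨fun h m => ⟨h.2 m, h.1 m⟩, fun h => ⟨fun m => (h m).2, fun m => (h m).1⟩⟩
    rw [hset, Fintype.card_piFinset]
    rw [Finset.prod_congr rfl (fun m _ => hfib (p m)), Finset.prod_const, card_univ,
      Fintype.card_fin, ← pow_mul]
    congr 1
    exact exp_arith n k t
  rw [Finset.sum_congr rfl fun p _ => hinner p, ← Finset.mul_sum]
  congr 1
  exact (aux_sum_patterns t b).trans (aux_choose t b)
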